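/- Devaney chaos implies sensitivity: let (T,X) be a topological semiflow on a uniform space (X,𝓤) which is Devaney chaotic, i.e., topologically transitive, with a dense set of periodic points, and not minimal. Then (T,X) is sensitive to initial conditions, and consequently X has no isolated points. -/

import Mathlib

open Filter Topology Set Uniformity

/-- A subset `B` of a topological monoid `T` is *syndetic* if there is a compact set
`K ⊆ T` such that `K·t` meets `B` for every `t ∈ T`. -/
def Syndetic {T : Type*} [Monoid T] [TopologicalSpace T] (B : Set T) : Prop :=
  ∃ K : Set T, IsCompact K ∧ ∀ t : T, ∃ k ∈ K, k * t ∈ B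

/-- The hitting-time set `N_T(U,V) = {t ∈ T : ∃ x ∈ U, t • x ∈ V}`. -/
def HittingTimes (T : Type*) {X : Type*} [Monoid T] [MulAction T X] (U V : Set X) : Set T :=
  {t : T | ∃ x ∈ U, t • x ∈ V}

/-- In a topologically transitive semiflow with dense periodic points, every hitting-time
set `N_T(V,W)` of nonempty open sets is (left-)syndetic, witnessed by an explicit compact set. -/
lemma aux_syndetic_hitting
    {T X : Type*} [Monoid T] [TopologicalSpace T] [ContinuousMul T]
    [UniformSpace X] [MulAction T X] [ContinuousSMul T X]
    (htrans : ∀ U V : Set X, IsOpen U → U.Nonempty → IsOpen V → V.Nonempty →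
      (HittingTimes T U V).Nonempty)
    (hper : Dense {x : X | Syndetic {t : T | t • x = x}})
    {V W : Set X} (hVo : IsOpen V) (hVne : V.Nonempty) (hWo : IsOpen W) (hWne : W.Nonempty) :
    ∃ K : Set T, IsCompact K ∧ ∀ t : T, ∃ k ∈ K, k * t ∈ HittingTimes T V W := by
  obtain ⟨t₀, u, huV, huW⟩ := htrans V W hVo hVne hWo hWne
  -- shrink V to points sent into W by t₀
  set V' : Set X := V ∩ (fun y => t₀ • y) ⁻¹' W with hV'def
  have hV'o : IsOpen V' := hVo.inter (hWo.preimage (continuous_const_smul t₀))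
  have hV'ne : V'.Nonempty := ⟨u, huV, huW⟩
  -- pick a periodic point p ∈ V'
  obtain ⟨p, hpPer, hpV'⟩ := hper.exists_mem_open hV'o hV'ne
  obtain ⟨Kp, hKpc, hKp⟩ := hpPer
  refine ⟨(t₀ * ·) '' Kp, hKpc.image (continuous_mul_left t₀), fun t => ?_⟩
  obtain ⟨k, hkK, hk⟩ := hKp t
  have hk' : (k * t) • p = p := hk
  refine ⟨t₀ * k, ⟨k, hkK, rfl⟩, p, hpV'.1, ?_⟩
  have : (t₀ * k * t) • p = t₀ • p := by
    rw [mul_assoc, mul_smul, hk']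
  rw [this]
  exact hpV'.2

/-- Tube lemma: a compact family of maps is equicontinuous at a fixed point. -/
lemma aux_tube
    {T X : Type*} [Monoid T] [TopologicalSpace T]
    [UniformSpace X] [MulAction T X] [ContinuousSMul T X]
    {K : Set T} (hK : IsCompact K) (x₀ : X) {ε : Set (X × X)} (hε : ε ∈ 𝓤 X) :
    ∃ U : Set X, IsOpen U ∧ x₀ ∈ U ∧ ∀ k ∈ K, ∀ u ∈ U, (k • x₀, k • u) ∈ ε := by
  obtain ⟨εo, ⟨hεo_mem, hεo_open⟩, hεo_sub⟩ := uniformity_hasBasis_open.mem_iff.1 hε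
  set ψ : T × X → X × X := fun p => (p.1 • x₀, p.1 • p.2) with hψdef
  have hψ : Continuous ψ :=
    (continuous_fst.smul continuous_const).prodMk (continuous_fst.smul continuous_snd)
  have hO : IsOpen (ψ ⁻¹' εo) := hεo_open.preimage hψ
  have hsub : K ×ˢ ({x₀} : Set X) ⊆ ψ ⁻¹' εo := by
    rintro ⟨k, y⟩ ⟨-, hy⟩
    have : y = x₀ := hy
    subst this
    exact refl_mem_uniformity hεo_mem
  obtain ⟨u, v, huo, hvo, hKu, hxv, huv⟩ :=
    generalized_tube_lemma hK isCompact_singleton hO hsub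
  refine ⟨v, hvo, hxv rfl, fun k hk u' hu' => ?_⟩
  exact hεo_sub (huv (Set.mk_mem_prod (hKu hk) hu'))

/-- Devaney chaos implies sensitivity: a topological semiflow `(T,X)` on a uniform space
which is topologically transitive, has a dense set of periodic points (points whose
stabilizer is syndetic), and is not minimal, is sensitive to initial conditions; and
consequently `X` has no isolated points. -/
theorem devaney_chaos_implies_sensitive
    {T X : Type*} [Monoid T] [TopologicalSpace T] [ContinuousMul T]
    [UniformSpace X] [MulAction T X] [ContinuousSMul T X]
    (htrans : ∀ U V : Set X, IsOpen U → U.Nonempty → IsOpen V → V.Nonempty →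
      (HittingTimes T U V).Nonempty)
    (hper : Dense {x : X | Syndetic {t : T | t • x = x}})
    (hnonmin : ∃ x : X, ¬ Dense (MulAction.orbit T x)) :
    (∃ ε ∈ 𝓤 X, ∀ x : X, ∀ V ∈ 𝓝 x, ∃ y ∈ V, ∃ t : T, (t • x, t • y) ∉ ε) ∧
    (∀ x : X, Filter.NeBot (𝓝[≠] x)) := by
  obtain ⟨x₀, hx₀⟩ := hnonmin
  set A : Set X := closure (MulAction.orbit T x₀) with hAdef
  -- a point z uniformly far from A
  have hz' : ∃ z : X, z ∉ A := by
    by_contra h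
    push_neg at h
    exact hx₀ fun y => h y
  obtain ⟨z, hz⟩ := hz'
  have hAc : Aᶜ ∈ 𝓝 z := isClosed_closure.isOpen_compl.mem_nhds hz
  obtain ⟨εb, hεb, hball⟩ := UniformSpace.mem_nhds_iff.1 hAc
  obtain ⟨ε1, hε1, hε1s, hε1c⟩ := comp_symm_mem_uniformity_sets hεb
  obtain ⟨ε5, hε5, hε5s, hε5c⟩ := comp_symm_mem_uniformity_sets hε1
  -- an open neighborhood W of z inside ball z ε5
  obtain ⟨W, hWsub, hWo, hzW⟩ := mem_nhds_iff.1 (UniformSpace.ball_mem_nhds z hε5)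
  -- main sensitivity claim
  have hsens : ∀ x : X, ∀ V ∈ 𝓝 x, ∃ y ∈ V, ∃ t : T, (t • x, t • y) ∉ ε5 := by
    intro x V hV
    obtain ⟨O, hOV, hOo, hxO⟩ := mem_nhds_iff.1 hV
    have hOne : O.Nonempty := ⟨x, hxO⟩
    -- compact syndeticity witness for N(O, W)
    obtain ⟨K, hKc, hK⟩ :=
      aux_syndetic_hitting htrans hper hOo hOne hWo ⟨z, hzW⟩
    -- tube around x₀ for the compact set K
    obtain ⟨U, hUo, hx₀U, hU⟩ := aux_tube hKc x₀ hε5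
    -- transitivity: send a point of O into U
    obtain ⟨s, v₁, hv₁O, hv₁U⟩ := htrans O U hOo hOne hUo ⟨x₀, hx₀U⟩
    -- syndeticity: at the shifted time, O also hits W (near z)
    obtain ⟨k₂, hk₂K, v₂, hv₂O, hv₂W⟩ := hK s
    set τ : T := k₂ * s with hτdef
    by_cases h1 : (τ • x, τ • v₁) ∈ ε5
    · by_cases h2 : (τ • x, τ • v₂) ∈ ε5
      · exfalso
        -- the image of v₁ is ε5-close to k₂ • x₀ ∈ A
        have htube : (k₂ • x₀, k₂ • (s • v₁)) ∈ ε5 := hU k₂ hk₂K (s • v₁) hv₁U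
        have hτv₁ : τ • v₁ = k₂ • (s • v₁) := mul_smul k₂ s v₁
        have h4 : (τ • v₁, k₂ • x₀) ∈ ε5 := by
          rw [hτv₁]
          exact hε5s.symm _ _ htube
        -- the image of v₂ is ε5-close to z
        have h1' : (z, τ • v₂) ∈ ε5 := hWsub hv₂W
        have h2' : (τ • v₂, τ • x) ∈ ε5 := hε5s.symm _ _ h2
        -- compose: (z, k₂ • x₀) ∈ εb
        have hza : (z, τ • x) ∈ ε1 := hε5c (SetRel.prodMk_mem_comp h1' h2')
        have hab : (τ • x, k₂ • x₀) ∈ ε1 := hε5c (SetRel.prodMk_mem_comp h1 h4)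
        have hfin : (z, k₂ • x₀) ∈ εb := hε1c (SetRel.prodMk_mem_comp hza hab)
        have : k₂ • x₀ ∈ Aᶜ := hball hfin
        exact this (subset_closure (MulAction.mem_orbit x₀ k₂))
      · exact ⟨v₂, hOV hv₂O, τ, h2⟩
    · exact ⟨v₁, hOV hv₁O, τ, h1⟩
  refine ⟨⟨ε5, hε5, hsens⟩, fun x => ?_⟩
  -- no isolated points
  by_contra h
  rw [Filter.not_neBot] at h
  have hemp : (∅ : Set X) ∈ 𝓝[≠] x := by rw [h]; exact Filter.mem_bot
  obtain ⟨U, hUo, hxU, hUsub⟩ := mem_nhdsWithin.1 hemp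
  obtain ⟨y, hyU, t, hty⟩ := hsens x U (hUo.mem_nhds hxU)
  have hyx : y = x := by
    by_contra hne
    exact hUsub ⟨hyU, hne⟩
  rw [hyx] at hty
  exact hty (refl_mem_uniformity hε5)
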